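/- Let H be an invertible matrix in ℝ^{n×n} and let A ∈ ℝ^{n×n} be symmetric positive semi-definite. Then C = H^T H + A is invertible, and ‖C^{-1} H^T‖ ≤ ‖H^{-1}‖ in the operator norm. -/

import Mathlib

open Matrix

open scoped RealInnerProductSpace

private lemma key_adj {n : ℕ} (M : Matrix (Fin n) (Fin n) ℝ)
    (u v : EuclideanSpace ℝ (Fin n)) :
    ⟪Matrix.toEuclideanCLM (𝕜 := ℝ) Mᴴ u, v⟫ = ⟪u, Matrix.toEuclideanCLM (𝕜 := ℝ) M v⟫ := by
  rw [← star_eq_conjTranspose, map_star, ContinuousLinearMap.star_eq_adjoint,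
    ContinuousLinearMap.adjoint_inner_left]

set_option maxHeartbeats 1000000 in
set_option synthInstance.maxHeartbeats 1000000 in
theorem stmt17 (n : ℕ) (H A : Matrix (Fin n) (Fin n) ℝ)
    (hH : IsUnit H) (hA : A.PosSemidef) :
    IsUnit (Hᵀ * H + A) ∧
    ‖Matrix.toEuclideanCLM (𝕜 := ℝ) ((Hᵀ * H + A)⁻¹ * Hᵀ)‖ ≤
      ‖Matrix.toEuclideanCLM (𝕜 := ℝ) H⁻¹‖ := by
  have hconj : Hᵀ = Hᴴ := (conjTranspose_eq_transpose_of_trivial H).symm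
  have hHH : (Hᵀ * H).PosDef := by
    rw [hconj]
    refine .of_dotProduct_mulVec_pos (isHermitian_conjTranspose_mul_self _) fun x hx => ?_
    rw [← mulVec_mulVec, dotProduct_mulVec, vecMul_conjTranspose, star_star]
    exact dotProduct_star_self_pos_iff.mpr
      (((mulVec_injective_iff_isUnit.mpr hH).ne_iff' (mulVec_zero H)).mpr hx)
  have hC : (Hᵀ * H + A).PosDef := hHH.add_posSemidef hA
  have hCu : IsUnit (Hᵀ * H + A) := hC.isUnit
  refine ⟨hCu, ?_⟩
  -- pass to the adjoint
  have h1 : ((Hᵀ * H + A)⁻¹ * Hᵀ)ᴴ = H * (Hᵀ * H + A)⁻¹ := by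
    rw [conjTranspose_mul, conjTranspose_nonsing_inv, hC.1, hconj,
      conjTranspose_conjTranspose]
  have h2 : ‖Matrix.toEuclideanCLM (𝕜 := ℝ) ((Hᵀ * H + A)⁻¹ * Hᵀ)‖ =
      ‖Matrix.toEuclideanCLM (𝕜 := ℝ) (H * (Hᵀ * H + A)⁻¹)‖ := by
    rw [← h1, ← star_eq_conjTranspose, map_star, ContinuousLinearMap.star_eq_adjoint]
    exact (ContinuousLinearMap.adjoint.norm_map _).symm
  rw [h2]
  refine ContinuousLinearMap.opNorm_le_bound _ (norm_nonneg _) fun x => ?_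
  set y := Matrix.toEuclideanCLM (𝕜 := ℝ) (Hᵀ * H + A)⁻¹ x with hy
  have happ : Matrix.toEuclideanCLM (𝕜 := ℝ) (H * (Hᵀ * H + A)⁻¹) x =
      Matrix.toEuclideanCLM (𝕜 := ℝ) H y := by
    rw [_root_.map_mul, ContinuousLinearMap.mul_apply]
  -- positivity of A
  have hApsd : 0 ≤ ⟪Matrix.toEuclideanCLM (𝕜 := ℝ) A y, y⟫ := by
    rw [real_inner_comm, EuclideanSpace.inner_eq_star_dotProduct]
    simpa [dotProduct_comm] using hA.dotProduct_mulVec_nonneg (WithLp.equiv 2 _ y)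
  have e1 : ⟪Matrix.toEuclideanCLM (𝕜 := ℝ) (Hᵀ * H) y, y⟫ =
      ‖Matrix.toEuclideanCLM (𝕜 := ℝ) H y‖ ^ 2 := by
    rw [_root_.map_mul, ContinuousLinearMap.mul_apply, hconj, key_adj,
      real_inner_self_eq_norm_sq]
  have e2 : Matrix.toEuclideanCLM (𝕜 := ℝ) (Hᵀ * H + A) y = x := by
    rw [hy, ← ContinuousLinearMap.mul_apply, ← _root_.map_mul,
      Matrix.mul_nonsing_inv _ ((isUnit_iff_isUnit_det _).mp hCu), _root_.map_one,
      ContinuousLinearMap.one_apply]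
  have e4 : ‖Matrix.toEuclideanCLM (𝕜 := ℝ) H y‖ ^ 2 ≤ ⟪x, y⟫ := by
    have hsum : ⟪x, y⟫ = ⟪Matrix.toEuclideanCLM (𝕜 := ℝ) (Hᵀ * H) y, y⟫ +
        ⟪Matrix.toEuclideanCLM (𝕜 := ℝ) A y, y⟫ := by
      rw [← e2, map_add, ContinuousLinearMap.add_apply, inner_add_left]
    rw [hsum, ← e1]
    linarith
  have hinv1 : ((H⁻¹)ᴴ : Matrix (Fin n) (Fin n) ℝ) = (Hᵀ)⁻¹ := by
    rw [conjTranspose_nonsing_inv, ← hconj]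
  have e5 : ⟪x, y⟫ = ⟪Matrix.toEuclideanCLM (𝕜 := ℝ) (Hᵀ)⁻¹ x,
      Matrix.toEuclideanCLM (𝕜 := ℝ) H y⟫ := by
    rw [← hinv1, key_adj, ← ContinuousLinearMap.mul_apply, ← _root_.map_mul,
      Matrix.nonsing_inv_mul _ ((isUnit_iff_isUnit_det _).mp hH), _root_.map_one,
      ContinuousLinearMap.one_apply]
  have e6 : ‖Matrix.toEuclideanCLM (𝕜 := ℝ) (Hᵀ)⁻¹ x‖ ≤
      ‖Matrix.toEuclideanCLM (𝕜 := ℝ) H⁻¹‖ * ‖x‖ := by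
    have hnorm : ‖Matrix.toEuclideanCLM (𝕜 := ℝ) (Hᵀ)⁻¹‖ =
        ‖Matrix.toEuclideanCLM (𝕜 := ℝ) H⁻¹‖ := by
      rw [← hinv1, ← star_eq_conjTranspose, map_star, ContinuousLinearMap.star_eq_adjoint]
      exact ContinuousLinearMap.adjoint.norm_map _
    calc ‖Matrix.toEuclideanCLM (𝕜 := ℝ) (Hᵀ)⁻¹ x‖ ≤
        ‖Matrix.toEuclideanCLM (𝕜 := ℝ) (Hᵀ)⁻¹‖ * ‖x‖ :=
          ContinuousLinearMap.le_opNorm _ _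
      _ = ‖Matrix.toEuclideanCLM (𝕜 := ℝ) H⁻¹‖ * ‖x‖ := by rw [hnorm]
  rw [happ]
  set t := ‖Matrix.toEuclideanCLM (𝕜 := ℝ) H y‖ with ht
  have ht0 : 0 ≤ t := norm_nonneg _
  have hchain : t ^ 2 ≤ (‖Matrix.toEuclideanCLM (𝕜 := ℝ) H⁻¹‖ * ‖x‖) * t := by
    calc t ^ 2 ≤ ⟪x, y⟫ := e4
      _ = ⟪Matrix.toEuclideanCLM (𝕜 := ℝ) (Hᵀ)⁻¹ x,
          Matrix.toEuclideanCLM (𝕜 := ℝ) H y⟫ := e5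
      _ ≤ ‖Matrix.toEuclideanCLM (𝕜 := ℝ) (Hᵀ)⁻¹ x‖ * t := real_inner_le_norm _ _
      _ ≤ (‖Matrix.toEuclideanCLM (𝕜 := ℝ) H⁻¹‖ * ‖x‖) * t :=
          mul_le_mul_of_nonneg_right e6 ht0
  rcases eq_or_lt_of_le ht0 with h | h
  · rw [← h]
    exact mul_nonneg (norm_nonneg _) (norm_nonneg _)
  · have := le_of_mul_le_mul_right (by nlinarith : t * t ≤
      (‖Matrix.toEuclideanCLM (𝕜 := ℝ) H⁻¹‖ * ‖x‖) * t) h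
    exact this
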